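/- Suppose the norm ‖·‖ on ℝ^k satisfies Assumption 1, 0 < γ₂ ≤ γ₁ ≤ 1, and C₁, C₂ > 0; set k₊ := |V|. Then there exists a constant c₊ = c₊(C₁,C₂) ∈ (0,∞) such that lim_{b→0⁺} b^{−(k₊/γ₁ + (k−k₊)/γ₂)} ∫_{ℝ^k} ( 1 − (C₁/b)‖(x)_{V+}‖^{γ₁} − (C₂/b)‖(x)_{V−}‖^{γ₂} )₊² dx = c₊, where the integral is with respect to Lebesgue measure on ℝ^k. -/

import Mathlib

open MeasureTheory Filter Finset

/-- Positive part of a vector relative to coordinate set `V`. -/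
def vplus {k : ℕ} (V : Finset (Fin k)) (z : Fin k → ℝ) : Fin k → ℝ :=
  fun j => if j ∈ V then max (z j) 0 else z j

/-- Negative part of a vector relative to coordinate set `V`. -/
def vminus {k : ℕ} (V : Finset (Fin k)) (z : Fin k → ℝ) : Fin k → ℝ :=
  vplus V (-z)

/-- A norm on `ℝ^k` satisfying Assumption 1 (monotone in the magnitude of each coordinate). -/
structure MonNorm (k : ℕ) where
  N : (Fin k → ℝ) → ℝ
  add_le : ∀ x y, N (x + y) ≤ N x + N y
  smul_eq : ∀ (a : ℝ) (x), N (a • x) = |a| * N x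
  eq_zero_iff : ∀ x, N x = 0 ↔ x = 0
  mono : ∀ z w : Fin k → ℝ, (∀ j, |z j| ≤ |w j|) → N z ≤ N w

/-- Hölder continuity with exponent `γ` and constant `C` w.r.t. the norm `N`. -/
def HolderW {k : ℕ} (N : (Fin k → ℝ) → ℝ) (γ C : ℝ) (f : (Fin k → ℝ) → ℝ) : Prop :=
  ∀ x z : Fin k → ℝ, |f x - f z| ≤ C * N (x - z) ^ γ

/-- Coordinatewise monotonicity w.r.t. the coordinates in `V`. -/
def MonoV {k : ℕ} (V : Finset (Fin k)) (f : (Fin k → ℝ) → ℝ) : Prop :=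
  ∀ x z : Fin k → ℝ, (∀ j ∈ V, z j ≤ x j) → (∀ j ∉ V, x j = z j) → f z ≤ f x

/-- The monotone Hölder class `Λ₊,V(γ,C)`. -/
def Lam {k : ℕ} (V : Finset (Fin k)) (N : (Fin k → ℝ) → ℝ) (γ C : ℝ) :
    Set ((Fin k → ℝ) → ℝ) :=
  {f | HolderW N γ C f ∧ MonoV V f}

namespace MonNorm
variable {k : ℕ} (Nm : MonNorm k)

lemma n_zero : Nm.N 0 = 0 := (Nm.eq_zero_iff 0).2 rfl

lemma n_nonneg (x : Fin k → ℝ) : 0 ≤ Nm.N x := by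
  have h1 := Nm.add_le x (-x)
  have h2 : Nm.N (-x) = Nm.N x := by
    have := Nm.smul_eq (-1) x
    simpa using this
  rw [add_neg_cancel, Nm.n_zero] at h1
  linarith

lemma n_single (j : Fin k) (t : ℝ) :
    Nm.N (Pi.single j t) = |t| * Nm.N (Pi.single j 1) := by
  have : (Pi.single j t : Fin k → ℝ) = t • (Pi.single j 1 : Fin k → ℝ) := by
    funext i
    by_cases h : i = j <;> simp [Pi.single_apply, h]
  rw [this, Nm.smul_eq]

lemma n_coord_le (z : Fin k → ℝ) (j : Fin k) :
    |z j| * Nm.N (Pi.single j 1) ≤ Nm.N z := by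
  rw [← Nm.n_single]
  apply Nm.mono
  intro i
  by_cases h : i = j <;> simp [Pi.single_apply, h, abs_nonneg]

lemma n_single_one_pos (j : Fin k) : 0 < Nm.N (Pi.single j 1) := by
  rcases lt_or_eq_of_le (Nm.n_nonneg (Pi.single j 1)) with h | h
  · exact h
  · exfalso
    have := (Nm.eq_zero_iff (Pi.single j 1)).1 h.symm
    have := congrFun this j
    simp at this

lemma n_sum_le {ι : Type*} (s : Finset ι) (f : ι → (Fin k → ℝ)) :
    Nm.N (∑ i ∈ s, f i) ≤ ∑ i ∈ s, Nm.N (f i) := by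
  classical
  induction s using Finset.induction with
  | empty => simp [Nm.n_zero]
  | insert _ _ h ih =>
      rename_i a s
      rw [Finset.sum_insert h, Finset.sum_insert h]
      exact le_trans (Nm.add_le _ _) (by linarith)

lemma n_le_sum (z : Fin k → ℝ) :
    Nm.N z ≤ ∑ j, |z j| * Nm.N (Pi.single j 1) := by
  calc Nm.N z = Nm.N (∑ j, Pi.single j (z j)) := by rw [Finset.univ_sum_single]
  _ ≤ ∑ j, Nm.N (Pi.single j (z j)) := Nm.n_sum_le _ _
  _ = ∑ j, |z j| * Nm.N (Pi.single j 1) := Finset.sum_congr rfl fun j _ => Nm.n_single j (z j)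

lemma n_lip (x y : Fin k → ℝ) : |Nm.N x - Nm.N y| ≤ Nm.N (x - y) := by
  rw [abs_sub_le_iff]
  constructor
  · have := Nm.add_le y (x - y)
    simp only [add_sub_cancel] at this
    linarith
  · have := Nm.add_le x (y - x)
    simp only [add_sub_cancel] at this
    have h2 : Nm.N (y - x) = Nm.N (x - y) := by
      have := Nm.smul_eq (-1) (x - y)
      simpa [neg_sub] using this
    linarith

lemma n_continuous : Continuous Nm.N := by
  rw [Metric.continuous_iff]
  intro x ε hε
  set M : ℝ := ∑ j : Fin k, Nm.N (Pi.single j 1) with hM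
  have hM0 : 0 ≤ M := Finset.sum_nonneg fun j _ => Nm.n_nonneg _
  refine ⟨ε / (M + 1), by positivity, fun y hy => ?_⟩
  have h1 : Nm.N (y - x) ≤ ∑ j, |(y - x) j| * Nm.N (Pi.single j 1) := Nm.n_le_sum _
  have h2 : ∀ j : Fin k, |(y - x) j| * Nm.N (Pi.single j 1) ≤ (ε / (M+1)) * Nm.N (Pi.single j 1) := by
    intro j
    apply mul_le_mul_of_nonneg_right _ (Nm.n_nonneg _)
    have := dist_le_pi_dist y x j
    calc |(y - x) j| = dist (y j) (x j) := by rw [Real.dist_eq]; simp [Pi.sub_apply]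
    _ ≤ dist y x := dist_le_pi_dist y x j
    _ ≤ ε / (M+1) := le_of_lt hy
  have h3 : Nm.N (y - x) ≤ (ε / (M+1)) * M := by
    calc Nm.N (y - x) ≤ ∑ j, |(y - x) j| * Nm.N (Pi.single j 1) := h1
    _ ≤ ∑ j : Fin k, (ε / (M+1)) * Nm.N (Pi.single j 1) := Finset.sum_le_sum (fun j _ => h2 j)
    _ = (ε / (M+1)) * M := by rw [← Finset.mul_sum]
  have h4 : (ε / (M+1)) * M < ε := by
    rw [div_mul_eq_mul_div, div_lt_iff₀ (by positivity)]
    nlinarith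
  calc dist (Nm.N y) (Nm.N x) = |Nm.N y - Nm.N x| := Real.dist_eq _ _
  _ ≤ Nm.N (y - x) := Nm.n_lip _ _
  _ < ε := lt_of_le_of_lt h3 h4

end MonNorm

lemma integral_comp_diag {k : ℕ} (c : Fin k → ℝ) (hc : ∀ j, 0 < c j)
    (F : (Fin k → ℝ) → ℝ) (hF : Continuous F) :
    ∫ x, F x = (∏ j, c j) * ∫ y : Fin k → ℝ, F (fun j => c j * y j) := by
  classical
  set f : (Fin k → ℝ) →ₗ[ℝ] (Fin k → ℝ) := Matrix.toLin' (Matrix.diagonal c) with hf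
  have hdet : LinearMap.det f = ∏ j, c j := by
    rw [hf, ← LinearMap.det_toMatrix' ]
    simp [Matrix.det_diagonal]
  have hprod : (0:ℝ) < ∏ j, c j := Finset.prod_pos (fun j _ => hc j)
  have hdet0 : LinearMap.det f ≠ 0 := by rw [hdet]; exact ne_of_gt hprod
  have hmap := Real.map_linearMap_volume_pi_eq_smul_volume_pi hdet0
  have hfc : Continuous f := LinearMap.continuous_on_pi f
  have happ : ∀ y, f y = fun j => c j * y j := by
    intro y
    funext j
    simp [hf, Matrix.toLin'_apply, Matrix.mulVec_diagonal]
  have h1 : ∫ y, F (f y) = ∫ x, F x ∂(Measure.map f volume) :=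
    (integral_map hfc.measurable.aemeasurable
      (hF.aestronglyMeasurable)).symm
  rw [hmap, integral_smul_measure] at h1
  have habs : |(LinearMap.det f)⁻¹| = (∏ j, c j)⁻¹ := by
    rw [hdet, abs_of_pos (by positivity)]
  rw [habs, ENNReal.toReal_ofReal (by positivity)] at h1
  have h2 : ∫ y : Fin k → ℝ, F (fun j => c j * y j) = (∏ j, c j)⁻¹ * ∫ x, F x := by
    rw [smul_eq_mul] at h1
    rw [← h1]
    exact integral_congr_ae (Filter.Eventually.of_forall fun y => by simp only []; rw [happ y])
  rw [h2]
  field_simp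


section
variable {k : ℕ}

def pv (V : Finset (Fin k)) (y : Fin k → ℝ) : Fin k → ℝ :=
  fun j => if j ∈ V then max (y j) 0 else 0

def qv (V : Finset (Fin k)) (y : Fin k → ℝ) : Fin k → ℝ :=
  fun j => if j ∈ V then 0 else y j

variable {V : Finset (Fin k)}

lemma vplus_eq_add (V : Finset (Fin k)) (y : Fin k → ℝ) :
    vplus V y = pv V y + qv V y := by
  funext j; by_cases h : j ∈ V <;> simp [vplus, pv, qv, h]

lemma continuous_pv (V : Finset (Fin k)) : Continuous (pv V) := by
  apply continuous_pi
  intro j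
  by_cases h : j ∈ V
  · simpa [pv, h] using (continuous_apply j).max continuous_const
  · simpa [pv, h] using continuous_const

lemma continuous_qv (V : Finset (Fin k)) : Continuous (qv V) := by
  apply continuous_pi
  intro j
  by_cases h : j ∈ V
  · simpa [qv, h] using (continuous_const : Continuous fun _ : Fin k → ℝ => (0:ℝ))
  · simpa [qv, h] using (continuous_apply j)

lemma continuous_rpow_const {γ : ℝ} (hγ : 0 ≤ γ) : Continuous (fun t : ℝ => t ^ γ) :=
  continuous_iff_continuousAt.2 fun x => Real.continuousAt_rpow_const x γ (Or.inr hγ)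


set_option maxHeartbeats 1000000 in
/-- the normalized integral
`b^{−(k₊/γ₁+(k−k₊)/γ₂)} ∫ (1 − (C₁/b)‖(x)_{V+}‖^{γ₁} − (C₂/b)‖(x)_{V−}‖^{γ₂})₊² dx`
converges to a finite positive constant as `b → 0⁺`. -/
theorem stmt_14 {k : ℕ} (V : Finset (Fin k)) (Nm : MonNorm k)
    (γ₁ γ₂ C₁ C₂ : ℝ)
    (hγ₂0 : 0 < γ₂) (hγ : γ₂ ≤ γ₁) (hγ₁1 : γ₁ ≤ 1)
    (hC₁ : 0 < C₁) (hC₂ : 0 < C₂) :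
    ∃ c : ℝ, 0 < c ∧
      Tendsto (fun b : ℝ =>
          b ^ (-((V.card : ℝ) / γ₁ + ((k : ℝ) - V.card) / γ₂)) *
            ∫ x : Fin k → ℝ,
              (max (1 - C₁ / b * Nm.N (vplus V x) ^ γ₁ -
                    C₂ / b * Nm.N (vminus V x) ^ γ₂) 0) ^ 2)
        (nhdsWithin 0 (Set.Ioi 0)) (nhds c) := by
  classical
  have hγ₁0 : 0 < γ₁ := lt_of_lt_of_le hγ₂0 hγ
  set δ : ℝ := γ₂⁻¹ - γ₁⁻¹ with hδdef
  have hδ0 : 0 ≤ δ := by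
    have h := inv_anti₀ hγ₂0 hγ
    simpa [hδdef, sub_nonneg] using h
  set ρ : ℝ := if δ = 0 then 1 else 0 with hρdef
  set α : ℝ := (V.card : ℝ) / γ₁ + ((k : ℝ) - V.card) / γ₂ with hαdef
  set g : ℝ → (Fin k → ℝ) → ℝ := fun b y =>
    (max (1 - C₁ * Nm.N (pv V y + (b ^ δ) • qv V y) ^ γ₁
            - C₂ * Nm.N ((b ^ (-δ)) • pv V (-y) + qv V (-y)) ^ γ₂) 0) ^ 2 with hgdef
  set G : (Fin k → ℝ) → ℝ := fun y =>
    if 0 < δ ∧ pv V (-y) ≠ 0 then 0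
    else (max (1 - C₁ * Nm.N (pv V y + ρ • qv V y) ^ γ₁
                 - C₂ * Nm.N (pv V (-y) + qv V (-y)) ^ γ₂) 0) ^ 2 with hGdef
  -- Step A : change of variables
  have heq : ∀ b ∈ Set.Ioi (0:ℝ),
      b ^ (-α) * (∫ x : Fin k → ℝ,
          (max (1 - C₁ / b * Nm.N (vplus V x) ^ γ₁ -
                C₂ / b * Nm.N (vminus V x) ^ γ₂) 0) ^ 2) = ∫ y, g b y := by
    intro b hb
    have hb0 : 0 < b := hb
    have hbne : b ≠ 0 := ne_of_gt hb0
    set sc : Fin k → ℝ := fun j => if j ∈ V then b ^ γ₁⁻¹ else b ^ γ₂⁻¹ with hscdef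
    have hcpos : ∀ j, 0 < sc j := by
      intro j; by_cases h : j ∈ V <;> simp [hscdef, h, Real.rpow_pos_of_pos hb0]
    have hvplus : Continuous (vplus V) := by
      have : vplus V = fun y => pv V y + qv V y := funext (vplus_eq_add V)
      rw [this]; exact (continuous_pv V).add (continuous_qv V)
    have hvminus : Continuous (vminus V) := by
      have : vminus V = fun y => vplus V (-y) := rfl
      rw [this]; exact hvplus.comp continuous_neg
    have hFcont : Continuous (fun x : Fin k → ℝ =>
        (max (1 - C₁ / b * Nm.N (vplus V x) ^ γ₁ - C₂ / b * Nm.N (vminus V x) ^ γ₂) 0) ^ 2) := by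
      apply Continuous.pow
      apply Continuous.max _ continuous_const
      apply Continuous.sub
      apply Continuous.sub continuous_const
      · exact continuous_const.mul ((continuous_rpow_const hγ₁0.le).comp
          (Nm.n_continuous.comp hvplus))
      · exact continuous_const.mul ((continuous_rpow_const hγ₂0.le).comp
          (Nm.n_continuous.comp hvminus))
    have hcov := integral_comp_diag sc hcpos _ hFcont
    -- the product of the scaling factors
    have hcard : (V.card : ℝ) ≤ (k : ℝ) := by
      have := Finset.card_le_univ V
      simp only [Finset.card_univ, Fintype.card_fin] at this
      exact_mod_cast this
    have hprod : ∏ j, sc j = b ^ α := by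
      have h1 : ∏ j, sc j = (∏ j ∈ V, sc j) * ∏ j ∈ Vᶜ, sc j :=
        (Finset.prod_mul_prod_compl V sc).symm
      have h2 : ∏ j ∈ V, sc j = (b ^ γ₁⁻¹) ^ (V.card) := by
        rw [← Finset.prod_const]
        exact Finset.prod_congr rfl fun j hj => by simp [hscdef, hj]
      have h3 : ∏ j ∈ Vᶜ, sc j = (b ^ γ₂⁻¹) ^ (Vᶜ.card) := by
        rw [← Finset.prod_const]
        refine Finset.prod_congr rfl fun j hj => ?_
        have : j ∉ V := Finset.mem_compl.1 hj
        simp [hscdef, this]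
      have h4 : (Vᶜ.card : ℝ) = (k : ℝ) - V.card := by
        rw [Finset.card_compl]
        simp only [Fintype.card_fin]
        rw [Nat.cast_sub]
        · exact_mod_cast Finset.card_le_univ V |>.trans (by simp)
      rw [h1, h2, h3, ← Real.rpow_natCast (b ^ γ₁⁻¹) V.card,
        ← Real.rpow_natCast (b ^ γ₂⁻¹) Vᶜ.card,
        ← Real.rpow_mul hb0.le, ← Real.rpow_mul hb0.le, ← Real.rpow_add hb0]
      congr 1
      rw [h4, hαdef]
      field_simp
    -- pointwise identity
    have hpoint : ∀ y : Fin k → ℝ,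
        (max (1 - C₁ / b * Nm.N (vplus V (fun j => sc j * y j)) ^ γ₁ -
              C₂ / b * Nm.N (vminus V (fun j => sc j * y j)) ^ γ₂) 0) ^ 2 = g b y := by
      intro y
      have hA : vplus V (fun j => sc j * y j)
          = (b ^ γ₁⁻¹) • (pv V y + (b ^ δ) • qv V y) := by
        funext j
        by_cases h : j ∈ V
        · simp only [vplus, pv, qv, h, if_true, hscdef, Pi.smul_apply, Pi.add_apply,
            smul_eq_mul, mul_zero, add_zero]
          rw [mul_max_of_nonneg _ _ (Real.rpow_pos_of_pos hb0 _).le, mul_zero]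
        · simp only [vplus, pv, qv, h, if_false, hscdef, Pi.smul_apply, Pi.add_apply,
            smul_eq_mul, zero_add]
          rw [← mul_assoc, ← Real.rpow_add hb0]
          congr 2
          rw [hδdef]; ring
      have hB : vminus V (fun j => sc j * y j)
          = (b ^ γ₂⁻¹) • ((b ^ (-δ)) • pv V (-y) + qv V (-y)) := by
        funext j
        by_cases h : j ∈ V
        · simp only [vminus, vplus, pv, qv, h, if_true, hscdef, Pi.smul_apply, Pi.add_apply,
            Pi.neg_apply, smul_eq_mul, add_zero]
          rw [← mul_assoc, ← Real.rpow_add hb0]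
          have he : γ₂⁻¹ + -δ = γ₁⁻¹ := by rw [hδdef]; ring
          rw [he, mul_max_of_nonneg _ _ (Real.rpow_pos_of_pos hb0 _).le, mul_zero, mul_neg]
        · simp only [vminus, vplus, pv, qv, h, if_false, hscdef, Pi.smul_apply, Pi.add_apply,
            Pi.neg_apply, smul_eq_mul, mul_zero, zero_add]
          ring
      have habs1 : |b ^ γ₁⁻¹| = b ^ γ₁⁻¹ := abs_of_pos (Real.rpow_pos_of_pos hb0 _)
      have habs2 : |b ^ γ₂⁻¹| = b ^ γ₂⁻¹ := abs_of_pos (Real.rpow_pos_of_pos hb0 _)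
      have hpow1 : (b ^ γ₁⁻¹) ^ γ₁ = b := by
        rw [← Real.rpow_mul hb0.le, inv_mul_cancel₀ (ne_of_gt hγ₁0), Real.rpow_one]
      have hpow2 : (b ^ γ₂⁻¹) ^ γ₂ = b := by
        rw [← Real.rpow_mul hb0.le, inv_mul_cancel₀ (ne_of_gt hγ₂0), Real.rpow_one]
      have h1 : C₁ / b * Nm.N (vplus V (fun j => sc j * y j)) ^ γ₁
          = C₁ * Nm.N (pv V y + (b ^ δ) • qv V y) ^ γ₁ := by
        rw [hA, Nm.smul_eq, habs1,
          Real.mul_rpow (Real.rpow_pos_of_pos hb0 _).le (Nm.n_nonneg _), hpow1]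
        field_simp
      have h2 : C₂ / b * Nm.N (vminus V (fun j => sc j * y j)) ^ γ₂
          = C₂ * Nm.N ((b ^ (-δ)) • pv V (-y) + qv V (-y)) ^ γ₂ := by
        rw [hB, Nm.smul_eq, habs2,
          Real.mul_rpow (Real.rpow_pos_of_pos hb0 _).le (Nm.n_nonneg _), hpow2]
        field_simp
      rw [h1, h2, hgdef]
    rw [hcov, hprod, ← mul_assoc, ← Real.rpow_add hb0, neg_add_cancel, Real.rpow_zero, one_mul]
    exact integral_congr_ae (Filter.Eventually.of_forall hpoint)
  -- dominating function
  obtain ⟨R, hR0, hRbound⟩ : ∃ R : ℝ, 0 < R ∧ ∀ w : Fin k → ℝ, ∀ j : Fin k,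
      ((C₁ * Nm.N w ^ γ₁ ≤ 1 → |w j| ≤ R) ∧ (C₂ * Nm.N w ^ γ₂ ≤ 1 → |w j| ≤ R)) := by
    have hNe : ∀ j : Fin k, 0 < Nm.N (Pi.single j 1) := Nm.n_single_one_pos
    set s₁ : ℝ := (1/C₁) ^ γ₁⁻¹ with hs₁def
    set s₂ : ℝ := (1/C₂) ^ γ₂⁻¹ with hs₂def
    have hs₁0 : 0 ≤ s₁ := Real.rpow_nonneg (by positivity) _
    have hs₂0 : 0 ≤ s₂ := Real.rpow_nonneg (by positivity) _
    set r : Fin k → ℝ := fun j => (s₁ + s₂) / Nm.N (Pi.single j 1) with hrdef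
    have hr0 : ∀ j, 0 ≤ r j := fun j => div_nonneg (by linarith) (hNe j).le
    have hsum0 : 0 ≤ ∑ j, r j := Finset.sum_nonneg fun j _ => hr0 j
    refine ⟨1 + ∑ j, r j, by linarith, ?_⟩
    intro w j
    have hrle : r j ≤ 1 + ∑ j', r j' := by
      have := Finset.single_le_sum (fun j' (_ : j' ∈ Finset.univ) => hr0 j') (Finset.mem_univ j)
      linarith
    have key : ∀ (C γ : ℝ), 0 < C → 0 < γ → C * Nm.N w ^ γ ≤ 1 → Nm.N w ≤ (1/C) ^ γ⁻¹ := by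
      intro C γ hC hγ' hle
      have h1 : Nm.N w ^ γ ≤ 1/C := by
        rw [le_div_iff₀' hC]; exact hle
      have h2 : (Nm.N w ^ γ) ^ γ⁻¹ ≤ (1/C) ^ γ⁻¹ :=
        Real.rpow_le_rpow (Real.rpow_nonneg (Nm.n_nonneg w) _) h1 (inv_nonneg.2 hγ'.le)
      rwa [← Real.rpow_mul (Nm.n_nonneg w), mul_inv_cancel₀ (ne_of_gt hγ'), Real.rpow_one] at h2
    have final : Nm.N w ≤ s₁ + s₂ → |w j| ≤ 1 + ∑ j', r j' := by
      intro hNw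
      have h4 : |w j| * Nm.N (Pi.single j 1) ≤ Nm.N w := Nm.n_coord_le w j
      have h5 : |w j| ≤ (s₁ + s₂) / Nm.N (Pi.single j 1) := by
        rw [le_div_iff₀ (hNe j)]
        linarith
      calc |w j| ≤ r j := h5
        _ ≤ 1 + ∑ j', r j' := hrle
    constructor
    · intro h
      exact final (by have := key C₁ γ₁ hC₁ hγ₁0 h; rw [← hs₁def] at this; linarith)
    · intro h
      exact final (by have := key C₂ γ₂ hC₂ hγ₂0 h; rw [← hs₂def] at this; linarith)
  set K : Set (Fin k → ℝ) := Set.univ.pi (fun _ => Set.Icc (-R) R) with hKdef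
  have hKmeas : MeasurableSet K := MeasurableSet.univ_pi (fun _ => measurableSet_Icc)
  have hKfin : volume K < ⊤ := by
    rw [hKdef, volume_pi_pi]
    exact ENNReal.prod_lt_top (fun j _ => by simp [Real.volume_Icc])
  set bound : (Fin k → ℝ) → ℝ := K.indicator (fun _ => 1) with hbounddef
  have hboundint : Integrable bound := by
    rw [hbounddef]
    rw [integrable_indicator_iff hKmeas]
    exact integrableOn_const hKfin.ne
  -- continuity of g b
  have hgcont : ∀ b : ℝ, Continuous (g b) := by
    intro b
    rw [hgdef]
    apply Continuous.pow
    apply Continuous.max _ continuous_const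
    apply Continuous.sub
    apply Continuous.sub continuous_const
    · exact continuous_const.mul ((continuous_rpow_const hγ₁0.le).comp
        (Nm.n_continuous.comp ((continuous_pv V).add ((continuous_qv V).const_smul (b ^ δ)))))
    · exact continuous_const.mul ((continuous_rpow_const hγ₂0.le).comp
        (Nm.n_continuous.comp ((((continuous_pv V).comp continuous_neg).const_smul (b ^ (-δ))).add
          ((continuous_qv V).comp continuous_neg))))
  -- domination
  have hterm : ∀ (C γ : ℝ), 0 ≤ C → ∀ z : Fin k → ℝ, 0 ≤ C * Nm.N z ^ γ :=
    fun C γ hC z => mul_nonneg hC (Real.rpow_nonneg (Nm.n_nonneg z) _)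
  have h_bound : ∀ b ∈ Set.Ioc (0:ℝ) 1, ∀ y, ‖g b y‖ ≤ bound y := by
    intro b hb y
    have hb0 : 0 < b := hb.1
    have hg0 : 0 ≤ g b y := by rw [hgdef]; exact sq_nonneg _
    by_cases hy : y ∈ K
    · have hby : bound y = 1 := by rw [hbounddef, Set.indicator_of_mem hy]
      rw [hby, Real.norm_eq_abs, abs_of_nonneg hg0, hgdef]
      apply pow_le_one₀ (le_max_right _ _)
      apply max_le _ zero_le_one
      have t1 := hterm C₁ γ₁ hC₁.le (pv V y + (b ^ δ) • qv V y)
      have t2 := hterm C₂ γ₂ hC₂.le ((b ^ (-δ)) • pv V (-y) + qv V (-y))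
      linarith
    · have hby : bound y = 0 := by rw [hbounddef, Set.indicator_of_notMem hy]
      have hgz : g b y = 0 := by
        by_contra hne
        have hT : 0 < 1 - C₁ * Nm.N (pv V y + (b ^ δ) • qv V y) ^ γ₁
            - C₂ * Nm.N ((b ^ (-δ)) • pv V (-y) + qv V (-y)) ^ γ₂ := by
          rcases le_or_gt (1 - C₁ * Nm.N (pv V y + (b ^ δ) • qv V y) ^ γ₁
            - C₂ * Nm.N ((b ^ (-δ)) • pv V (-y) + qv V (-y)) ^ γ₂) 0 with h | h
          · exact absurd (by rw [hgdef]; simp [max_eq_right h]) hne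
          · exact h
        have t1 := hterm C₁ γ₁ hC₁.le (pv V y + (b ^ δ) • qv V y)
        have t2 := hterm C₂ γ₂ hC₂.le ((b ^ (-δ)) • pv V (-y) + qv V (-y))
        have hu : C₁ * Nm.N (pv V y + (b ^ δ) • qv V y) ^ γ₁ ≤ 1 := by linarith
        have hv : C₂ * Nm.N ((b ^ (-δ)) • pv V (-y) + qv V (-y)) ^ γ₂ ≤ 1 := by linarith
        have hbd1 : 1 ≤ b ^ (-δ) :=
          Real.one_le_rpow_of_pos_of_le_one_of_nonpos hb.1 hb.2 (by linarith)
        apply hy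
        rw [hKdef, Set.mem_univ_pi]
        intro j
        rw [Set.mem_Icc]
        by_cases hj : j ∈ V
        · have hw1 := ((hRbound (pv V y + (b ^ δ) • qv V y) j).1) hu
          have hw2 := ((hRbound ((b ^ (-δ)) • pv V (-y) + qv V (-y)) j).2) hv
          have e1 : (pv V y + (b ^ δ) • qv V y) j = max (y j) 0 := by
            simp [pv, qv, hj]
          have e2 : ((b ^ (-δ)) • pv V (-y) + qv V (-y)) j = b ^ (-δ) * max (-(y j)) 0 := by
            simp [pv, qv, hj]
          rw [e1] at hw1
          rw [e2] at hw2
          have h1 : max (y j) 0 ≤ R := le_trans (le_abs_self _) hw1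
          have h2 : b ^ (-δ) * max (-(y j)) 0 ≤ R := le_trans (le_abs_self _) hw2
          have h3 : max (-(y j)) 0 ≤ b ^ (-δ) * max (-(y j)) 0 := by
            nlinarith [le_max_right (-(y j)) 0]
          constructor
          · linarith [le_max_left (-(y j)) 0]
          · exact le_trans (le_max_left _ _) h1
        · have hw2 := ((hRbound ((b ^ (-δ)) • pv V (-y) + qv V (-y)) j).2) hv
          have e2 : ((b ^ (-δ)) • pv V (-y) + qv V (-y)) j = -(y j) := by
            simp [pv, qv, hj]
          rw [e2, abs_neg] at hw2
          exact abs_le.1 hw2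
      rw [hby, hgz, norm_zero]
  -- pointwise limit
  have hbδ : 0 < δ → Tendsto (fun b : ℝ => b ^ δ) (nhdsWithin 0 (Set.Ioi 0)) (nhds 0) := by
    intro hδpos
    have hc : ContinuousAt (fun x : ℝ => x ^ δ) 0 :=
      Real.continuousAt_rpow_const 0 δ (Or.inr hδ0)
    have h := hc.tendsto.mono_left (nhdsWithin_le_nhds (s := Set.Ioi (0:ℝ)))
    rwa [Real.zero_rpow (ne_of_gt hδpos)] at h
  have h_lim : ∀ y, Tendsto (fun b => g b y) (nhdsWithin 0 (Set.Ioi 0)) (nhds (G y)) := by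
    intro y
    rcases eq_or_lt_of_le hδ0 with hδeq | hδpos
    · -- the case δ = 0
      have hδ' : δ = 0 := hδeq.symm
      have hconst : (fun b : ℝ => g b y) = fun _ => G y := by
        funext b
        rw [hgdef, hGdef]
        simp [hδ', hρdef, Real.rpow_zero, neg_zero, one_smul, lt_irrefl]
      rw [hconst]
      exact tendsto_const_nhds
    · have hρ0 : ρ = 0 := by rw [hρdef, if_neg (ne_of_gt hδpos)]
      by_cases hpm : pv V (-y) = 0
      · have hGy : G y = (max (1 - C₁ * Nm.N (pv V y) ^ γ₁
            - C₂ * Nm.N (qv V (-y)) ^ γ₂) 0) ^ 2 := by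
          simp only [hGdef]
          rw [if_neg (by simp [hpm])]
          rw [hρ0, hpm]
          simp
        have hgy : ∀ b : ℝ, g b y = (max (1 - C₁ * Nm.N (pv V y + (b ^ δ) • qv V y) ^ γ₁
              - C₂ * Nm.N (qv V (-y)) ^ γ₂) 0) ^ 2 := by
          intro b; rw [hgdef]; simp [hpm]
        have hcont : Continuous (fun a : ℝ => (max (1 - C₁ * Nm.N (pv V y + a • qv V y) ^ γ₁
              - C₂ * Nm.N (qv V (-y)) ^ γ₂) 0) ^ 2) := by
          apply Continuous.pow
          apply Continuous.max _ continuous_const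
          apply Continuous.sub _ continuous_const
          apply Continuous.sub continuous_const
          exact continuous_const.mul ((continuous_rpow_const hγ₁0.le).comp
            (Nm.n_continuous.comp (continuous_const.add (continuous_id.smul continuous_const))))
        have h3 := (hcont.tendsto 0).comp (hbδ hδpos)
        simp only [Function.comp_def, zero_smul, add_zero] at h3
        rw [hGy]
        exact Tendsto.congr (fun b => (hgy b).symm) h3
      · have hGy : G y = 0 := by simp only [hGdef]; rw [if_pos ⟨hδpos, hpm⟩]
        rw [hGy]
        have hNpm : 0 < Nm.N (pv V (-y)) := by
          rcases lt_or_eq_of_le (Nm.n_nonneg (pv V (-y))) with h | h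
          · exact h
          · exact absurd ((Nm.eq_zero_iff _).1 h.symm) hpm
        have hinv : Tendsto (fun b : ℝ => b ^ (-δ)) (nhdsWithin 0 (Set.Ioi 0)) atTop := by
          have h1 : Tendsto (fun b : ℝ => b ^ δ) (nhdsWithin 0 (Set.Ioi 0))
              (nhdsWithin 0 (Set.Ioi 0)) := by
            rw [tendsto_nhdsWithin_iff]
            exact ⟨hbδ hδpos, eventually_mem_nhdsWithin.mono
              (fun b hb => Real.rpow_pos_of_pos hb δ)⟩
          have h2 := tendsto_inv_nhdsGT_zero.comp h1
          apply h2.congr'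
          filter_upwards [self_mem_nhdsWithin] with b hb
          simp only [Function.comp_def]
          exact (Real.rpow_neg (le_of_lt hb) δ).symm
        have hev := hinv.eventually_ge_atTop (((1/C₂) ^ γ₂⁻¹ + 1) / Nm.N (pv V (-y)))
        have hevEq : (fun b : ℝ => g b y) =ᶠ[nhdsWithin 0 (Set.Ioi 0)] fun _ => (0:ℝ) := by
          filter_upwards [hev, self_mem_nhdsWithin] with b hb1 hb2
          have hb0 : (0:ℝ) < b := hb2
          have h4 : Nm.N ((b ^ (-δ)) • pv V (-y)) ≤
              Nm.N ((b ^ (-δ)) • pv V (-y) + qv V (-y)) := by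
            apply Nm.mono
            intro j
            by_cases hj : j ∈ V <;> simp [pv, qv, hj, abs_nonneg]
          have h5 : Nm.N ((b ^ (-δ)) • pv V (-y)) = b ^ (-δ) * Nm.N (pv V (-y)) := by
            rw [Nm.smul_eq, abs_of_pos (Real.rpow_pos_of_pos hb0 _)]
          have h6 : ((1/C₂) ^ γ₂⁻¹ + 1) / Nm.N (pv V (-y)) * Nm.N (pv V (-y))
              ≤ b ^ (-δ) * Nm.N (pv V (-y)) :=
            mul_le_mul_of_nonneg_right hb1 hNpm.le
          rw [div_mul_cancel₀ _ (ne_of_gt hNpm)] at h6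
          have hs0 : (0:ℝ) ≤ (1/C₂) ^ γ₂⁻¹ := Real.rpow_nonneg (by positivity) _
          have hge : (1/C₂) ^ γ₂⁻¹ ≤ Nm.N ((b ^ (-δ)) • pv V (-y) + qv V (-y)) := by
            linarith
          have h7 := Real.rpow_le_rpow hs0 hge hγ₂0.le
          rw [← Real.rpow_mul (by positivity : (0:ℝ) ≤ 1/C₂),
            inv_mul_cancel₀ (ne_of_gt hγ₂0), Real.rpow_one] at h7
          have h8 : 1 ≤ C₂ * Nm.N ((b ^ (-δ)) • pv V (-y) + qv V (-y)) ^ γ₂ := by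
            rw [← div_le_iff₀' hC₂]
            exact h7
          have t1 := hterm C₁ γ₁ hC₁.le (pv V y + (b ^ δ) • qv V y)
          rw [hgdef]
          have hmax : max (1 - C₁ * Nm.N (pv V y + (b ^ δ) • qv V y) ^ γ₁
              - C₂ * Nm.N ((b ^ (-δ)) • pv V (-y) + qv V (-y)) ^ γ₂) 0 = 0 :=
            max_eq_right (by linarith)
          simp only [hmax]
          norm_num
        exact Tendsto.congr' hevEq.symm tendsto_const_nhds
  -- G is measurable & integrable & has positive integral
  have hcontG : Continuous (fun y : Fin k → ℝ =>
      (max (1 - C₁ * Nm.N (pv V y + ρ • qv V y) ^ γ₁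
         - C₂ * Nm.N (pv V (-y) + qv V (-y)) ^ γ₂) 0) ^ 2) := by
    apply Continuous.pow
    apply Continuous.max _ continuous_const
    apply Continuous.sub
    apply Continuous.sub continuous_const
    · exact continuous_const.mul ((continuous_rpow_const hγ₁0.le).comp
        (Nm.n_continuous.comp ((continuous_pv V).add ((continuous_qv V).const_smul ρ))))
    · exact continuous_const.mul ((continuous_rpow_const hγ₂0.le).comp
        (Nm.n_continuous.comp (((continuous_pv V).comp continuous_neg).add
          ((continuous_qv V).comp continuous_neg))))
  have hGmeas : Measurable G := by
    have hcond : MeasurableSet {y : Fin k → ℝ | 0 < δ ∧ pv V (-y) ≠ 0} := by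
      by_cases h : 0 < δ
      · have he : {y : Fin k → ℝ | 0 < δ ∧ pv V (-y) ≠ 0} = {y | pv V (-y) ≠ 0} := by
          ext y; simp [h]
        rw [he]
        exact ((((continuous_pv V).comp continuous_neg).measurable)
          (measurableSet_singleton 0)).compl
      · have he : {y : Fin k → ℝ | 0 < δ ∧ pv V (-y) ≠ 0} = ∅ := by
          ext y; simp [h]
        rw [he]
        exact MeasurableSet.empty
    rw [hGdef]
    exact Measurable.ite hcond measurable_const hcontG.measurable
  have hGnonneg : ∀ y, 0 ≤ G y := by
    intro y
    simp only [hGdef]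
    split
    · exact le_refl 0
    · exact sq_nonneg _
  have hGbound : ∀ y, ‖G y‖ ≤ bound y := by
    intro y
    have hbound0 : 0 ≤ bound y := by
      rw [hbounddef]
      exact Set.indicator_nonneg (fun _ _ => zero_le_one) y
    by_cases hz : G y = 0
    · rw [hz, norm_zero]; exact hbound0
    · have hbranch : ¬ (0 < δ ∧ pv V (-y) ≠ 0) := by
        intro hcontr
        exact hz (by simp only [hGdef]; rw [if_pos hcontr])
      have hGexpr : G y = (max (1 - C₁ * Nm.N (pv V y + ρ • qv V y) ^ γ₁
          - C₂ * Nm.N (pv V (-y) + qv V (-y)) ^ γ₂) 0) ^ 2 := by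
        simp only [hGdef]; rw [if_neg hbranch]
      have hT : 0 < 1 - C₁ * Nm.N (pv V y + ρ • qv V y) ^ γ₁
          - C₂ * Nm.N (pv V (-y) + qv V (-y)) ^ γ₂ := by
        rcases le_or_gt (1 - C₁ * Nm.N (pv V y + ρ • qv V y) ^ γ₁
          - C₂ * Nm.N (pv V (-y) + qv V (-y)) ^ γ₂) 0 with h | h
        · exact absurd (by rw [hGexpr]; simp [max_eq_right h]) hz
        · exact h
      have t1 := hterm C₁ γ₁ hC₁.le (pv V y + ρ • qv V y)
      have t2 := hterm C₂ γ₂ hC₂.le (pv V (-y) + qv V (-y))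
      have hu : C₁ * Nm.N (pv V y + ρ • qv V y) ^ γ₁ ≤ 1 := by linarith
      have hv : C₂ * Nm.N (pv V (-y) + qv V (-y)) ^ γ₂ ≤ 1 := by linarith
      have hyK : y ∈ K := by
        rw [hKdef, Set.mem_univ_pi]
        intro j
        rw [Set.mem_Icc]
        by_cases hj : j ∈ V
        · have hw1 := ((hRbound (pv V y + ρ • qv V y) j).1) hu
          have hw2 := ((hRbound (pv V (-y) + qv V (-y)) j).2) hv
          have e1 : (pv V y + ρ • qv V y) j = max (y j) 0 := by simp [pv, qv, hj]
          have e2 : (pv V (-y) + qv V (-y)) j = max (-(y j)) 0 := by simp [pv, qv, hj]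
          rw [e1] at hw1
          rw [e2] at hw2
          have h1 : max (y j) 0 ≤ R := le_trans (le_abs_self _) hw1
          have h2 : max (-(y j)) 0 ≤ R := le_trans (le_abs_self _) hw2
          constructor
          · linarith [le_max_left (-(y j)) 0]
          · exact le_trans (le_max_left _ _) h1
        · have hw2 := ((hRbound (pv V (-y) + qv V (-y)) j).2) hv
          have e2 : (pv V (-y) + qv V (-y)) j = -(y j) := by simp [pv, qv, hj]
          rw [e2, abs_neg] at hw2
          exact abs_le.1 hw2
      have hby : bound y = 1 := by rw [hbounddef, Set.indicator_of_mem hyK]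
      rw [hby, Real.norm_eq_abs, abs_of_nonneg (hGnonneg y), hGexpr]
      apply pow_le_one₀ (le_max_right _ _)
      exact max_le (by linarith) zero_le_one
  have hGint : Integrable G :=
    hboundint.mono hGmeas.aestronglyMeasurable
      (Filter.Eventually.of_forall fun y => (hGbound y).trans (le_abs_self _))
  have hGpos : 0 < ∫ y, G y := by
    set Mone : ℝ := Nm.N (fun _ => (1:ℝ)) with hMdef
    have hM0 : 0 ≤ Mone := Nm.n_nonneg _
    set t : ℝ := min ((1/(4*C₁)) ^ γ₁⁻¹) ((1/(4*C₂)) ^ γ₂⁻¹) with htdef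
    have ht0 : 0 < t := lt_min (Real.rpow_pos_of_pos (by positivity) _)
      (Real.rpow_pos_of_pos (by positivity) _)
    set ε : ℝ := t / (Mone + 1) with hεdef
    have hε0 : 0 < ε := by positivity
    have hεM : ε * Mone ≤ t := by
      rw [hεdef, div_mul_eq_mul_div, div_le_iff₀ (by positivity)]
      nlinarith
    set B : Set (Fin k → ℝ) :=
      Set.univ.pi (fun j => if j ∈ V then Set.Icc 0 ε else Set.Icc (-ε) ε) with hBdef
    have hBmeas : MeasurableSet B :=
      MeasurableSet.univ_pi (fun j => by by_cases h : j ∈ V <;> simp [h, measurableSet_Icc])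
    have hBvolform : volume B =
        ∏ j : Fin k, volume (if j ∈ V then Set.Icc (0:ℝ) ε else Set.Icc (-ε) ε) := by
      rw [hBdef, volume_pi_pi]
    have hBfin : volume B ≠ ⊤ := by
      rw [hBvolform]
      exact (ENNReal.prod_lt_top (fun j _ => by
        by_cases h : j ∈ V <;> simp [h, Real.volume_Icc])).ne
    have hBpos : 0 < (volume B).toReal := by
      apply ENNReal.toReal_pos _ hBfin
      rw [hBvolform, Finset.prod_ne_zero_iff]
      intro j _
      by_cases h : j ∈ V <;>
        simp [h, Real.volume_Icc, ENNReal.ofReal_eq_zero] <;> linarith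
    have hGgeB : ∀ y ∈ B, (1/4 : ℝ) ≤ G y := by
      intro y hy
      rw [hBdef, Set.mem_univ_pi] at hy
      have hyV : ∀ j ∈ V, 0 ≤ y j ∧ y j ≤ ε := by
        intro j hj
        have h := hy j
        rw [if_pos hj, Set.mem_Icc] at h
        exact h
      have hyabs : ∀ j, |y j| ≤ ε := by
        intro j
        by_cases h : j ∈ V
        · have h2 := hyV j h
          rw [abs_le]
          exact ⟨by linarith, h2.2⟩
        · have h2 := hy j
          rw [if_neg h, Set.mem_Icc] at h2
          rw [abs_le]
          exact h2
      have hpm0 : pv V (-y) = 0 := by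
        funext j
        by_cases h : j ∈ V
        · have h2 := hyV j h
          simp only [pv, h, if_true, Pi.neg_apply, Pi.zero_apply]
          exact max_eq_right (by linarith)
        · simp [pv, h]
      have hcε : ∀ z : Fin k → ℝ, (∀ j, |z j| ≤ ε) → Nm.N z ≤ ε * Mone := by
        intro z hz
        have h1 : Nm.N z ≤ Nm.N (fun _ => ε) := by
          apply Nm.mono
          intro j
          rw [abs_of_pos hε0]
          exact hz j
        have h2 : (fun _ : Fin k => ε) = ε • (fun _ : Fin k => (1:ℝ)) := by
          funext j; simp
        rw [h2, Nm.smul_eq, abs_of_pos hε0] at h1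
        exact h1
      have hρabs : |ρ| ≤ 1 := by
        rw [hρdef]; split <;> norm_num
      have hw1 : Nm.N (pv V y + ρ • qv V y) ≤ ε * Mone := by
        apply hcε
        intro j
        by_cases h : j ∈ V
        · simp only [pv, qv, h, if_true, Pi.add_apply, Pi.smul_apply, smul_eq_mul,
            mul_zero, add_zero]
          rw [abs_of_nonneg (le_max_right _ _)]
          exact max_le (hyV j h).2 hε0.le
        · simp only [pv, qv, h, if_false, Pi.add_apply, Pi.smul_apply, smul_eq_mul, zero_add]
          rw [abs_mul]
          calc |ρ| * |y j| ≤ 1 * ε := by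
                apply mul_le_mul hρabs (hyabs j) (abs_nonneg _) zero_le_one
            _ = ε := one_mul ε
      have hw2 : Nm.N (pv V (-y) + qv V (-y)) ≤ ε * Mone := by
        apply hcε
        intro j
        by_cases h : j ∈ V
        · have h2 := hyV j h
          simp only [pv, qv, h, if_true, Pi.add_apply, Pi.neg_apply, add_zero]
          rw [max_eq_right (by linarith), abs_zero]
          exact hε0.le
        · simp only [pv, qv, h, if_false, Pi.add_apply, Pi.neg_apply, zero_add, abs_neg]
          exact hyabs j
      have hkey : ∀ (C γ : ℝ), 0 < C → 0 < γ → t ≤ (1/(4*C)) ^ γ⁻¹ →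
          ∀ z : Fin k → ℝ, Nm.N z ≤ ε * Mone → C * Nm.N z ^ γ ≤ 1/4 := by
        intro C γ hC hγ' hmin z hzle
        have h1 : Nm.N z ^ γ ≤ t ^ γ :=
          Real.rpow_le_rpow (Nm.n_nonneg z) (hzle.trans hεM) hγ'.le
        have h2 : t ^ γ ≤ 1/(4*C) := by
          have h4 := Real.rpow_le_rpow ht0.le hmin hγ'.le
          rwa [← Real.rpow_mul (by positivity), inv_mul_cancel₀ (ne_of_gt hγ'),
            Real.rpow_one] at h4
        calc C * Nm.N z ^ γ ≤ C * (1/(4*C)) :=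
              mul_le_mul_of_nonneg_left (h1.trans h2) hC.le
          _ = 1/4 := by field_simp
      have hb1 : C₁ * Nm.N (pv V y + ρ • qv V y) ^ γ₁ ≤ 1/4 :=
        hkey C₁ γ₁ hC₁ hγ₁0 (min_le_left _ _) _ hw1
      have hb2 : C₂ * Nm.N (pv V (-y) + qv V (-y)) ^ γ₂ ≤ 1/4 :=
        hkey C₂ γ₂ hC₂ hγ₂0 (min_le_right _ _) _ hw2
      have hGexpr : G y = (max (1 - C₁ * Nm.N (pv V y + ρ • qv V y) ^ γ₁
          - C₂ * Nm.N (pv V (-y) + qv V (-y)) ^ γ₂) 0) ^ 2 := by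
        simp only [hGdef]
        rw [if_neg (fun h => h.2 hpm0)]
      rw [hGexpr]
      have hT : (1/2 : ℝ) ≤ max (1 - C₁ * Nm.N (pv V y + ρ • qv V y) ^ γ₁
          - C₂ * Nm.N (pv V (-y) + qv V (-y)) ^ γ₂) 0 :=
        le_max_of_le_left (by linarith)
      calc (1/4 : ℝ) = (1/2 : ℝ)^2 := by norm_num
        _ ≤ _ := pow_le_pow_left₀ (by norm_num) hT 2
    have hineq := setIntegral_ge_of_const_le_real hBmeas hBfin hGgeB hGint.integrableOn
    change (1/4:ℝ) * (volume B).toReal ≤ _ at hineq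
    have hle := setIntegral_le_integral (s := B) hGint (Filter.Eventually.of_forall hGnonneg)
    have : 0 < (1/4 : ℝ) * (volume B).toReal := by positivity
    linarith
  -- assemble
  refine ⟨∫ y, G y, hGpos, ?_⟩
  have htendsto : Tendsto (fun b => ∫ y, g b y) (nhdsWithin 0 (Set.Ioi 0)) (nhds (∫ y, G y)) := by
    apply tendsto_integral_filter_of_dominated_convergence bound
    · filter_upwards with b
      exact (hgcont b).aestronglyMeasurable
    · filter_upwards [Ioc_mem_nhdsGT_of_mem (Set.mem_Ico.2 ⟨le_refl 0, zero_lt_one⟩)] with b hb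
      exact Filter.Eventually.of_forall (h_bound b hb)
    · exact hboundint
    · exact Filter.Eventually.of_forall h_lim
  apply htendsto.congr'
  filter_upwards [self_mem_nhdsWithin] with b hb
  exact (heq b hb).symm


end
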